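/- Coalescence of weakly labeled graphs: let G and H be graphs with weak harmonic labelings ℓ_G: V_G → {0,…,n−1} and ℓ_H: V_H → I (where I = {0,…,m−1} or ℤ_{≥0}). Suppose the vertex v_{n−1} labeled n−1 in G is a leaf whose unique neighbor v satisfies ℓ_G(v) + ℓ_H(w) = n−1, where w is the unique neighbor of the vertex w_0 labeled 0 in H (also a leaf). Then the graph G·H obtained by identifying v_{n−1} with w_0 admits a weak harmonic labeling, given by ℓ(u) = ℓ_G(u) for u ∈ G and ℓ(u) = ℓ_H(u) + n − 1 for u ∈ H. -/

import Mathlib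

/-- The coalescence `G ·_a^b H`: the disjoint union of `G` and `H` with the vertex `a`
of `G` identified with the vertex `b` of `H`. -/
def coalescence {α β : Type*} (G : SimpleGraph α) (H : SimpleGraph β) (a : α) (b : β) :
    SimpleGraph (α ⊕ {y : β // y ≠ b}) :=
  SimpleGraph.fromRel (fun u v =>
    match u, v with
    | Sum.inl x, Sum.inl y => G.Adj x y
    | Sum.inl x, Sum.inr y => x = a ∧ H.Adj b y.1
    | Sum.inr x, Sum.inr y => H.Adj x.1 y.1
    | Sum.inr _, Sum.inl _ => False)

section Aux
variable {α β : Type*} (G : SimpleGraph α) (H : SimpleGraph β) (a : α) (b : β)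

lemma adj_ll {x y : α} : (coalescence G H a b).Adj (Sum.inl x) (Sum.inl y) ↔ G.Adj x y := by
  simp only [coalescence, SimpleGraph.fromRel_adj, ne_eq, Sum.inl.injEq]
  constructor
  · rintro ⟨h1, h2 | h2⟩
    · exact h2
    · exact h2.symm
  · intro h; exact ⟨h.ne, Or.inl h⟩

lemma adj_lr {x : α} {y : {y : β // y ≠ b}} :
    (coalescence G H a b).Adj (Sum.inl x) (Sum.inr y) ↔ x = a ∧ H.Adj b y.1 := by
  simp [coalescence, SimpleGraph.fromRel_adj]

lemma adj_rl {x : α} {y : {y : β // y ≠ b}} :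
    (coalescence G H a b).Adj (Sum.inr y) (Sum.inl x) ↔ x = a ∧ H.Adj b y.1 := by
  rw [SimpleGraph.adj_comm]; exact adj_lr G H a b

lemma adj_rr {x y : {y : β // y ≠ b}} :
    (coalescence G H a b).Adj (Sum.inr x) (Sum.inr y) ↔ H.Adj x.1 y.1 := by
  simp only [coalescence, SimpleGraph.fromRel_adj, ne_eq, Sum.inr.injEq]
  constructor
  · rintro ⟨h1, h2 | h2⟩
    · exact h2
    · exact h2.symm
  · intro h; exact ⟨fun e => h.ne (congrArg Subtype.val e), Or.inl h⟩

-- neighbor sets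
lemma nbhd_inl {x : α} (hx : x ≠ a) :
    (coalescence G H a b).neighborSet (Sum.inl x) = Sum.inl '' G.neighborSet x := by
  ext u
  cases u with
  | inl y => simp [SimpleGraph.mem_neighborSet, adj_ll]
  | inr z => simp [SimpleGraph.mem_neighborSet, adj_lr, hx]

noncomputable def coalMap {β : Type*} (α : Type*) (a : α) (b : β) : β → α ⊕ {y : β // y ≠ b} :=
  open Classical in fun z => if h : z = b then Sum.inl a else Sum.inr ⟨z, h⟩

lemma coalMap_b : coalMap α a b b = Sum.inl a := by simp [coalMap]

lemma coalMap_ne {z : β} (h : z ≠ b) : coalMap α a b z = Sum.inr ⟨z, h⟩ := by simp [coalMap, h]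

lemma coalMap_inj : Function.Injective (coalMap α a b) := by
  intro z1 z2 h
  by_cases h1 : z1 = b <;> by_cases h2 : z2 = b
  · rw [h1, h2]
  · rw [h1, coalMap_b a b, coalMap_ne a b h2] at h; exact absurd h (by simp)
  · rw [h2, coalMap_b a b, coalMap_ne a b h1] at h; exact absurd h (by simp)
  · rw [coalMap_ne a b h1, coalMap_ne a b h2] at h
    simpa [Subtype.ext_iff] using h

lemma nbhd_inr (y : {y : β // y ≠ b}) :
    (coalescence G H a b).neighborSet (Sum.inr y) = coalMap α a b '' H.neighborSet y.1 := by
  ext u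
  cases u with
  | inl x =>
    simp only [SimpleGraph.mem_neighborSet, adj_rl, Set.mem_image]
    constructor
    · rintro ⟨rfl, hadj⟩
      exact ⟨b, hadj.symm, coalMap_b x b⟩
    · rintro ⟨z, hz, hzz⟩
      by_cases hzb : z = b
      · rw [hzb, coalMap_b a b] at hzz
        subst hzb
        exact ⟨(Sum.inl_injective hzz).symm, hz.symm⟩
      · rw [coalMap_ne a b hzb] at hzz; exact absurd hzz (by simp)
  | inr z =>
    simp only [SimpleGraph.mem_neighborSet, adj_rr, Set.mem_image]
    constructor
    · intro hadj
      exact ⟨z.1, hadj, by rw [coalMap_ne a b z.2]⟩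
    · rintro ⟨t, ht, htt⟩
      by_cases htb : t = b
      · rw [htb, coalMap_b a b] at htt; exact absurd htt (by simp)
      · rw [coalMap_ne a b htb] at htt
        obtain rfl : (⟨t, htb⟩ : {y : β // y ≠ b}) = z := Sum.inr_injective htt
        exact ht
lemma nbhd_inla (v : α) (w : β) (hav : G.neighborSet a = {v}) (hbw : H.neighborSet b = {w})
    (hwb : w ≠ b) :
    (coalescence G H a b).neighborSet (Sum.inl a) =
      {Sum.inl v, Sum.inr ⟨w, hwb⟩} := by
  ext u
  cases u with
  | inl y =>
    have : G.Adj a y ↔ y = v := by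
      rw [← SimpleGraph.mem_neighborSet, hav, Set.mem_singleton_iff]
    simp [SimpleGraph.mem_neighborSet, adj_ll, this]
  | inr z =>
    have : H.Adj b z.1 ↔ z = ⟨w, hwb⟩ := by
      rw [← SimpleGraph.mem_neighborSet, hbw, Set.mem_singleton_iff, Subtype.ext_iff]
    simp [SimpleGraph.mem_neighborSet, adj_lr, this]

end Aux

/-- Coalescence of weakly labeled graphs.  Suppose `ℓG : V_G → {0,…,n−1}` and
`ℓH : V_H → I` (with `I = {0,…,m−1}` or `I = ℤ_{≥0}`) are weak harmonic labelings, the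
vertex `a` labeled `n−1` in `G` is a leaf with unique neighbor `v`, the vertex `b`
labeled `0` in `H` is a leaf with unique neighbor `w`, and `ℓG v + ℓH w = n − 1`.
Then `u ↦ ℓG u` on `G` and `u ↦ ℓH u + (n−1)` on `H` is a weak harmonic labeling of the
coalescence of `G` and `H` at `a` and `b`. -/
theorem coalescence_weak_harmonic_labeling {α β : Type*}
    (G : SimpleGraph α) (H : SimpleGraph β) (ℓG : α → ℤ) (ℓH : β → ℤ) (n m : ℕ)
    (hn : 2 ≤ n)
    (hGinj : Function.Injective ℓG) (hGrange : Set.range ℓG = Set.Icc 0 ((n : ℤ) - 1))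
    (hHinj : Function.Injective ℓH)
    (hHrange : Set.range ℓH = Set.Icc 0 ((m : ℤ) - 1) ∨ Set.range ℓH = Set.Ici 0)
    (hGharm : ∀ x : α, (G.neighborSet x).ncard ≠ 1 →
      ((G.neighborSet x).ncard : ℤ) * ℓG x = ∑ᶠ y ∈ G.neighborSet x, ℓG y)
    (hHharm : ∀ x : β, (H.neighborSet x).ncard ≠ 1 →
      ((H.neighborSet x).ncard : ℤ) * ℓH x = ∑ᶠ y ∈ H.neighborSet x, ℓH y)
    (a : α) (ha : ℓG a = (n : ℤ) - 1) (v : α) (hav : G.neighborSet a = {v})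
    (b : β) (hb : ℓH b = 0) (w : β) (hbw : H.neighborSet b = {w})
    (hsum : ℓG v + ℓH w = (n : ℤ) - 1) :
    ∀ ℓ : α ⊕ {y : β // y ≠ b} → ℤ,
      (∀ x : α, ℓ (Sum.inl x) = ℓG x) →
      (∀ y : {y : β // y ≠ b}, ℓ (Sum.inr y) = ℓH y.1 + ((n : ℤ) - 1)) →
      Function.Injective ℓ ∧
      (Set.range ℓH = Set.Icc 0 ((m : ℤ) - 1) →
        Set.range ℓ = Set.Icc 0 ((n : ℤ) + (m : ℤ) - 2)) ∧
      (Set.range ℓH = Set.Ici 0 → Set.range ℓ = Set.Ici 0) ∧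
      (∀ u, ((coalescence G H a b).neighborSet u).ncard ≠ 1 →
        (((coalescence G H a b).neighborSet u).ncard : ℤ) * ℓ u =
          ∑ᶠ x ∈ (coalescence G H a b).neighborSet u, ℓ x) := by
  intro ℓ hl hr
  -- basic facts
  have hHnonneg : ∀ z, 0 ≤ ℓH z := by
    intro z
    have hz : ℓH z ∈ Set.range ℓH := ⟨z, rfl⟩
    rcases hHrange with hI | hI
    · rw [hI] at hz; exact hz.1
    · rw [hI] at hz; exact hz
  have hHpos : ∀ z, z ≠ b → 1 ≤ ℓH z := by
    intro z hz
    have h0 : ℓH z ≠ 0 := fun h => hz (hHinj (h.trans hb.symm))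
    have := hHnonneg z; omega
  have hGmem : ∀ x, ℓG x ∈ Set.Icc (0:ℤ) ((n:ℤ)-1) := by
    intro x; rw [← hGrange]; exact ⟨x, rfl⟩
  have hwbadj : H.Adj b w := by
    rw [← SimpleGraph.mem_neighborSet, hbw]; rfl
  have hwb : w ≠ b := hwbadj.ne'
  refine ⟨?_, ?_, ?_, ?_⟩
  -- injectivity
  · intro u1 u2 h
    cases u1 with
    | inl x1 =>
      cases u2 with
      | inl x2 =>
        rw [hl, hl] at h
        exact congrArg Sum.inl (hGinj h)
      | inr y2 =>
        exfalso
        rw [hl, hr] at h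
        have h1 := (hGmem x1).2
        have h2 := hHpos y2.1 y2.2
        linarith
    | inr y1 =>
      cases u2 with
      | inl x2 =>
        exfalso
        rw [hr, hl] at h
        have h1 := (hGmem x2).2
        have h2 := hHpos y1.1 y1.2
        linarith
      | inr y2 =>
        rw [hr, hr] at h
        exact congrArg Sum.inr (Subtype.ext (hHinj (by linarith)))
  -- ranges
  · intro hI
    have hrange : Set.range ℓ =
        Set.range ℓG ∪ (fun t => t + ((n:ℤ)-1)) '' (Set.range ℓH \ {0}) := by
      ext t
      constructor
      · rintro ⟨u, rfl⟩
        cases u with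
        | inl x => exact Or.inl ⟨x, (hl x).symm⟩
        | inr y =>
          exact Or.inr ⟨ℓH y.1, ⟨⟨y.1, rfl⟩,
            fun h0 => y.2 (hHinj ((Set.eq_of_mem_singleton h0).trans hb.symm))⟩, (hr y).symm⟩
      · rintro (⟨x, rfl⟩ | ⟨t0, ⟨⟨z, rfl⟩, ht0⟩, rfl⟩)
        · exact ⟨Sum.inl x, hl x⟩
        · have hzb : z ≠ b := fun h => ht0 (by simp [h, hb])
          exact ⟨Sum.inr ⟨z, hzb⟩, hr _⟩
    have hm : 1 ≤ m := by
      have h0 : (0:ℤ) ∈ Set.Icc (0:ℤ) ((m:ℤ)-1) := by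
        rw [← hI]; exact ⟨b, hb⟩
      have := h0.2; omega
    have h1 : Set.Icc (0:ℤ) ((m:ℤ)-1) \ {0} = Set.Icc 1 ((m:ℤ)-1) := by
      ext t; simp only [Set.mem_diff, Set.mem_Icc, Set.mem_singleton_iff]; omega
    have h2 : (fun t => t + ((n:ℤ)-1)) '' Set.Icc 1 ((m:ℤ)-1) =
        Set.Icc ((n:ℤ)) ((m:ℤ)+((n:ℤ)-1)-1) := by
      rw [Set.image_add_const_Icc]; congr 1 <;> ring
    rw [hrange, hGrange, hI, h1, h2]
    ext t
    simp only [Set.mem_union, Set.mem_Icc]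
    omega
  · intro hI
    have hrange : Set.range ℓ =
        Set.range ℓG ∪ (fun t => t + ((n:ℤ)-1)) '' (Set.range ℓH \ {0}) := by
      ext t
      constructor
      · rintro ⟨u, rfl⟩
        cases u with
        | inl x => exact Or.inl ⟨x, (hl x).symm⟩
        | inr y =>
          exact Or.inr ⟨ℓH y.1, ⟨⟨y.1, rfl⟩,
            fun h0 => y.2 (hHinj ((Set.eq_of_mem_singleton h0).trans hb.symm))⟩, (hr y).symm⟩
      · rintro (⟨x, rfl⟩ | ⟨t0, ⟨⟨z, rfl⟩, ht0⟩, rfl⟩)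
        · exact ⟨Sum.inl x, hl x⟩
        · have hzb : z ≠ b := fun h => ht0 (by simp [h, hb])
          exact ⟨Sum.inr ⟨z, hzb⟩, hr _⟩
    have h1 : Set.Ici (0:ℤ) \ {0} = Set.Ici 1 := by
      ext t; simp only [Set.mem_diff, Set.mem_Ici, Set.mem_singleton_iff]; omega
    have h2 : (fun t => t + ((n:ℤ)-1)) '' Set.Ici 1 = Set.Ici ((n:ℤ)) := by
      rw [Set.image_add_const_Ici]; congr 1; ring
    rw [hrange, hGrange, hI, h1, h2]
    ext t
    simp only [Set.mem_union, Set.mem_Icc, Set.mem_Ici]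
    omega
  -- harmonicity
  · intro u hne
    cases u with
    | inl x =>
      by_cases hx : x = a
      · subst hx
        rw [nbhd_inla G H x b v w hav hbw hwb]
        have hne2 : (Sum.inl v : α ⊕ {y : β // y ≠ b}) ≠ Sum.inr ⟨w, hwb⟩ := by simp
        rw [Set.ncard_pair hne2, finsum_mem_pair hne2, hl, hl, hr]
        rw [ha]
        push_cast
        linarith
      · rw [nbhd_inl G H a b hx] at hne ⊢
        rw [Set.ncard_image_of_injective _ Sum.inl_injective] at hne ⊢
        rw [finsum_mem_image (Set.injOn_of_injective Sum.inl_injective)]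
        rw [finsum_mem_congr rfl (fun y _ => hl y), hl]
        exact hGharm x hne
    | inr y =>
      rw [nbhd_inr G H a b y] at hne ⊢
      rw [Set.ncard_image_of_injective _ (coalMap_inj a b)] at hne ⊢
      rw [finsum_mem_image (Set.injOn_of_injective (coalMap_inj a b))]
      have hgl : ∀ z, ℓ (coalMap α a b z) = ℓH z + ((n:ℤ)-1) := by
        intro z
        by_cases hz : z = b
        · rw [hz, coalMap_b a b, hl, ha, hb]; ring
        · rw [coalMap_ne a b hz, hr]
      rw [finsum_mem_congr rfl (fun z _ => hgl z), hr y]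
      by_cases hfin : (H.neighborSet y.1).Finite
      · have hsum2 : ∑ᶠ z ∈ H.neighborSet y.1, (ℓH z + ((n:ℤ)-1)) =
            (∑ᶠ z ∈ H.neighborSet y.1, ℓH z) +
              ((H.neighborSet y.1).ncard : ℤ) * ((n:ℤ)-1) := by
          rw [← hfin.coe_toFinset, finsum_mem_coe_finset, finsum_mem_coe_finset,
            Finset.sum_add_distrib, Finset.sum_const, nsmul_eq_mul, Set.ncard_coe_finset]
        rw [hsum2, mul_add, hHharm y.1 hne]
      · have hinf : (H.neighborSet y.1).Infinite := hfin
        rw [hinf.ncard]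
        simp only [Nat.cast_zero, zero_mul]
        symm
        apply finsum_mem_eq_zero_of_infinite
        have hs : H.neighborSet y.1 ∩ Function.support (fun z => ℓH z + ((n:ℤ)-1)) =
            H.neighborSet y.1 := by
          apply Set.inter_eq_self_of_subset_left
          intro z _
          have h1 := hHnonneg z
          simp only [Function.mem_support]
          intro h0
          have : (2:ℤ) ≤ n := by exact_mod_cast hn
          linarith
        rw [hs]
        exact hinf
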